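/- For every state (m, v) ∈ ℝ² and adjoint (p_m, p_v) ∈ ℝ², the Isaacs (minimax) condition holds pointwise for the Isaacs integrand: inf over (u,π) ∈ U×P of sup over (θ,ξ) ∈ ℝ² of f(u, π, θ, ξ) equals sup over (θ,ξ) ∈ ℝ² of inf over (u,π) ∈ U×P of f(u, π, θ, ξ). -/

import Mathlib

/-- The Isaacs integrand
`f(u, π, θ, ξ) = pm·(ηu + θ) + pv·(−2βv + Σ² + ξ − χπ) + w₁·m² + (w̄₂ + κu)·v + R·π²
  + Ru·u² − θ²/(4λm) − ξ²/(4λv)`, with `Σ² = σL² + σc²`. -/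
noncomputable def isaacsF (β η χ w₁ w₂bar κ Ru R lm lv σL σc m v pm pv : ℝ)
    (u p θ ξ : ℝ) : ℝ :=
  pm * (η * u + θ) + pv * (-2 * β * v + (σL ^ 2 + σc ^ 2) + ξ - χ * p)
    + w₁ * m ^ 2 + (w₂bar + κ * u) * v + R * p ^ 2 + Ru * u ^ 2
    - θ ^ 2 / (4 * lm) - ξ ^ 2 / (4 * lv)

/-- For every state `(m, v)` and adjoint `(pm, pv)`, the Isaacs (minimax)
condition holds pointwise for the Isaacs integrand:
`inf_{(u,π) ∈ U×P} sup_{(θ,ξ) ∈ ℝ²} f(u, π, θ, ξ)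
  = sup_{(θ,ξ) ∈ ℝ²} inf_{(u,π) ∈ U×P} f(u, π, θ, ξ)`. -/
theorem isaacs_condition_pointwise
    (β η χ w₁ w₂bar κ Ru R lm lv : ℝ) (σL σc : ℝ)
    (hβ : 0 < β) (hη : 0 < η) (hχ : 0 < χ) (hw₁ : 0 < w₁) (hw₂ : 0 < w₂bar)
    (hκ : 0 < κ) (hRu : 0 < Ru) (hR : 0 < R) (hlm : 0 < lm) (hlv : 0 < lv)
    (umin umax pmax : ℝ) (humm : umin ≤ umax) (hpmax : 0 ≤ pmax)
    (m v pm pv : ℝ) :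
    sInf ((fun q : ℝ × ℝ =>
        sSup ((fun d : ℝ × ℝ =>
            isaacsF β η χ w₁ w₂bar κ Ru R lm lv σL σc m v pm pv q.1 q.2 d.1 d.2) ''
          Set.univ)) ''
      (Set.Icc umin umax ×ˢ Set.Icc 0 pmax))
    = sSup ((fun d : ℝ × ℝ =>
        sInf ((fun q : ℝ × ℝ =>
            isaacsF β η χ w₁ w₂bar κ Ru R lm lv σL σc m v pm pv q.1 q.2 d.1 d.2) ''
          (Set.Icc umin umax ×ˢ Set.Icc 0 pmax))) ''
      Set.univ) := by
  classical
  set F : ℝ × ℝ → ℝ × ℝ → ℝ := fun q d =>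
    isaacsF β η χ w₁ w₂bar κ Ru R lm lv σL σc m v pm pv q.1 q.2 d.1 d.2 with hF
  set A : ℝ × ℝ → ℝ := fun q =>
    pm * (η * q.1) + pv * (-2 * β * v + (σL ^ 2 + σc ^ 2) - χ * q.2)
      + w₁ * m ^ 2 + (w₂bar + κ * q.1) * v + R * q.2 ^ 2 + Ru * q.1 ^ 2 with hA
  set B : ℝ × ℝ → ℝ := fun d =>
    pm * d.1 + pv * d.2 - d.1 ^ 2 / (4 * lm) - d.2 ^ 2 / (4 * lv) with hB
  have hsplit : ∀ q d, F q d = A q + B d := by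
    intro q d
    simp only [hF, hA, hB, isaacsF]
    ring
  set S : ℝ := lm * pm ^ 2 + lv * pv ^ 2 with hS
  set dstar : ℝ × ℝ := (2 * lm * pm, 2 * lv * pv) with hdstar
  have hBd : B dstar = S := by
    simp only [hB, hdstar, hS]
    field_simp
    ring
  have hBle : ∀ d : ℝ × ℝ, B d ≤ S := by
    rintro ⟨θ, ξ⟩
    have h1 : pm * θ - lm * pm ^ 2 ≤ θ ^ 2 / (4 * lm) := by
      rw [le_div_iff₀ (by positivity)]
      nlinarith [sq_nonneg (θ - 2 * lm * pm)]
    have h2 : pv * ξ - lv * pv ^ 2 ≤ ξ ^ 2 / (4 * lv) := by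
      rw [le_div_iff₀ (by positivity)]
      nlinarith [sq_nonneg (ξ - 2 * lv * pv)]
    simp only [hB, hS]
    linarith
  set K : Set (ℝ × ℝ) := Set.Icc umin umax ×ˢ Set.Icc 0 pmax with hK
  have hKc : IsCompact K := (isCompact_Icc).prod isCompact_Icc
  have hKne : K.Nonempty := ⟨(umin, 0), by
    constructor
    · exact ⟨le_refl _, humm⟩
    · exact ⟨le_refl _, hpmax⟩⟩
  have hAcont : ContinuousOn A K := by
    apply Continuous.continuousOn
    simp only [hA]
    fun_prop
  obtain ⟨q₀, hq₀K, hq₀min⟩ := hKc.exists_isMinOn hKne hAcont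
  have hq₀ : ∀ q ∈ K, A q₀ ≤ A q := fun q hq => hq₀min hq
  -- inner sup on LHS
  have hinner : ∀ q : ℝ × ℝ, sSup ((fun d => F q d) '' Set.univ) = A q + S := by
    intro q
    apply IsGreatest.csSup_eq
    constructor
    · exact ⟨dstar, Set.mem_univ _, by show F q dstar = _; rw [hsplit, hBd]⟩
    · rintro x ⟨d, -, rfl⟩
      show F q d ≤ _
      rw [hsplit]
      exact add_le_add_right (hBle d) _
  -- inner inf on RHS
  have hinner' : ∀ d : ℝ × ℝ, sInf ((fun q => F q d) '' K) = A q₀ + B d := by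
    intro d
    apply IsLeast.csInf_eq
    constructor
    · exact ⟨q₀, hq₀K, by show F q₀ d = _; rw [hsplit]⟩
    · rintro x ⟨q, hq, rfl⟩
      show _ ≤ F q d
      rw [hsplit]
      exact add_le_add_left (hq₀ q hq) _
  calc sInf ((fun q => sSup ((fun d => F q d) '' Set.univ)) '' K)
      = sInf ((fun q => A q + S) '' K) := by
        congr 1; apply Set.image_congr; intro q _; exact hinner q
    _ = A q₀ + S := by
        apply IsLeast.csInf_eq
        constructor
        · exact ⟨q₀, hq₀K, rfl⟩
        · rintro x ⟨q, hq, rfl⟩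
          exact add_le_add_left (hq₀ q hq) _
    _ = sSup ((fun d => A q₀ + B d) '' Set.univ) := by
        symm
        apply IsGreatest.csSup_eq
        constructor
        · exact ⟨dstar, Set.mem_univ _, by show A q₀ + B dstar = _; rw [hBd]⟩
        · rintro x ⟨d, -, rfl⟩
          exact add_le_add_right (hBle d) _
    _ = sSup ((fun d => sInf ((fun q => F q d) '' K)) '' Set.univ) := by
        congr 1; apply Set.image_congr; intro d _; exact (hinner' d).symm
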